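/- Let Γ be a connected simple graph with normalized Laplacian ℒ = D^{−1/2} L D^{−1/2} and normalized Green's function 𝒢 = the Moore–Penrose pseudoinverse of ℒ. Then for all vertices u, v: 𝒢(u,v) = (√(d_u d_v)/(vol²(Γ)·τ)) · ( Σ_{T₁∪T₂ ∈ 𝔽₂, u,v ∈ T₁} vol²(T₂) − Σ_{T₁∪T₂ ∈ 𝔽₂, u ∈ T₁, v ∈ T₂} vol(T₁)·vol(T₂) ), where τ is the number of spanning trees, 𝔽₂ the set of spanning 2-forests, d_u the degree of u, vol(T) = Σ_{z∈T} d_z, and vol(Γ) = Σ_{z∈V} d_z. -/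

import Mathlib

open scoped Classical
open Finset Matrix

namespace Paper

variable {V : Type*} [Fintype V] [DecidableEq V]

/-- Out-degree of `u` in the weighted digraph with weight function `ω`. -/
noncomputable def deg (ω : V → V → ℝ) (u : V) : ℝ := ∑ v, ω u v

/-- A weighted digraph is strongly connected if every vertex can reach every other
vertex along edges of positive weight. -/
def StronglyConnected (ω : V → V → ℝ) : Prop :=
  ∀ u v : V, Relation.ReflTransGen (fun a b => 0 < ω a b) u v

/-- The combinatorial Laplacian `L = D - A` of a weighted digraph. -/
noncomputable def lap (ω : V → V → ℝ) : Matrix V V ℝ :=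
  Matrix.of fun u v => (if u = v then deg ω u else 0) - ω u v

/-- The transition probability matrix `P = D⁻¹ A` of the random walk. -/
noncomputable def trans (ω : V → V → ℝ) : Matrix V V ℝ :=
  Matrix.of fun u v => ω u v / deg ω u

/-- `G` is the Moore–Penrose pseudoinverse of `M` (four Penrose conditions). -/
def IsMoorePenrose (M G : Matrix V V ℝ) : Prop :=
  M * G * M = M ∧ G * M * G = G ∧ (M * G)ᵀ = M * G ∧ (G * M)ᵀ = G * M

/-- `v` reaches `r` under iteration of the parent function `f`. -/
def Reaches (f : V → V) (v r : V) : Prop := ∃ k : ℕ, f^[k] v = r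

/-- `f` encodes a spanning in-tree of the weighted digraph `ω` rooted at `r`:
every non-root vertex has its unique out-edge `(v, f v)` an edge of the digraph,
the root is a fixed point, and every vertex reaches the root. -/
def IsInTree (ω : V → V → ℝ) (r : V) (f : V → V) : Prop :=
  f r = r ∧ (∀ v, v ≠ r → 0 < ω v (f v)) ∧ ∀ v, Reaches f v r

/-- The weight of the spanning in-tree encoded by `f` with root `r`. -/
noncomputable def treeWeight (ω : V → V → ℝ) (r : V) (f : V → V) : ℝ :=
  ∏ v ∈ Finset.univ.erase r, ω v (f v)

/-- `τ_r`: total weight of spanning in-trees rooted at `r`. -/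
noncomputable def tau (ω : V → V → ℝ) (r : V) : ℝ :=
  ∑ f ∈ Finset.univ.filter (fun f : V → V => IsInTree ω r f), treeWeight ω r f

/-- `f` encodes a rooted spanning 2-forest with (distinct) roots `r₁`, `r₂`. -/
def IsForest2 (ω : V → V → ℝ) (r₁ r₂ : V) (f : V → V) : Prop :=
  r₁ ≠ r₂ ∧ f r₁ = r₁ ∧ f r₂ = r₂ ∧ (∀ v, v ≠ r₁ → v ≠ r₂ → 0 < ω v (f v)) ∧
    ∀ v, Reaches f v r₁ ∨ Reaches f v r₂

/-- The weight of the rooted spanning 2-forest encoded by `f` with roots `r₁`, `r₂`. -/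
noncomputable def forestWeight (ω : V → V → ℝ) (r₁ r₂ : V) (f : V → V) : ℝ :=
  ∏ v ∈ (Finset.univ.erase r₁).erase r₂, ω v (f v)

/-- The component of the root `b`: vertices reaching `b` under `f`. -/
noncomputable def comp (f : V → V) (b : V) : Finset V :=
  Finset.univ.filter (fun z => Reaches f z b)

/-! ### Undirected weighted graphs, edges as unordered pairs -/

/-- Weighted degree in an undirected weighted graph given by `ωs : Sym2 V → ℝ`. -/
noncomputable def degS (ωs : Sym2 V → ℝ) (u : V) : ℝ := ∑ v, ωs s(u, v)

/-- The volume of an undirected weighted graph. -/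
noncomputable def volS (ωs : Sym2 V → ℝ) : ℝ := ∑ u, degS ωs u

/-- Connectivity of an undirected weighted graph. -/
def ConnectedW (ωs : Sym2 V → ℝ) : Prop :=
  ∀ u v : V, Relation.ReflTransGen (fun a b => 0 < ωs s(a, b)) u v

/-- An edge set `E` is a spanning tree of the weighted undirected graph `ωs`. -/
def IsWTree (ωs : Sym2 V → ℝ) (E : Finset (Sym2 V)) : Prop :=
  (∀ e ∈ E, 0 < ωs e) ∧ (SimpleGraph.fromEdgeSet (E : Set (Sym2 V))).IsAcyclic ∧
    (SimpleGraph.fromEdgeSet (E : Set (Sym2 V))).Connected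

/-- An edge set `E` is a spanning 2-forest of the weighted undirected graph `ωs`
(acyclic, with exactly two connected components). -/
def IsWTwoForest (ωs : Sym2 V → ℝ) (E : Finset (Sym2 V)) : Prop :=
  (∀ e ∈ E, 0 < ωs e) ∧ (SimpleGraph.fromEdgeSet (E : Set (Sym2 V))).IsAcyclic ∧
    Nat.card (SimpleGraph.fromEdgeSet (E : Set (Sym2 V))).ConnectedComponent = 2

/-- The weight of a subgraph given by an edge set. -/
noncomputable def wgt (ωs : Sym2 V → ℝ) (E : Finset (Sym2 V)) : ℝ := ∏ e ∈ E, ωs e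

/-- Total weight of spanning trees of the weighted undirected graph `ωs`. -/
noncomputable def tauW (ωs : Sym2 V → ℝ) : ℝ :=
  ∑ E ∈ Finset.univ.filter (fun E : Finset (Sym2 V) => IsWTree ωs E), wgt ωs E

/-- The combinatorial Laplacian of a weighted undirected graph. -/
noncomputable def lapW (ωs : Sym2 V → ℝ) : Matrix V V ℝ :=
  Matrix.of fun u v => (if u = v then degS ωs u else 0) - ωs s(u, v)

/-! ### Simple graphs -/

/-- An edge set `E` is a spanning tree of the simple graph `G`. -/
def IsSTree (G : SimpleGraph V) (E : Finset (Sym2 V)) : Prop :=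
  (E : Set (Sym2 V)) ⊆ G.edgeSet ∧ (SimpleGraph.fromEdgeSet (E : Set (Sym2 V))).IsAcyclic ∧
    (SimpleGraph.fromEdgeSet (E : Set (Sym2 V))).Connected

/-- An edge set `E` is a spanning 2-forest of the simple graph `G`. -/
def IsSTwoForest (G : SimpleGraph V) (E : Finset (Sym2 V)) : Prop :=
  (E : Set (Sym2 V)) ⊆ G.edgeSet ∧ (SimpleGraph.fromEdgeSet (E : Set (Sym2 V))).IsAcyclic ∧
    Nat.card (SimpleGraph.fromEdgeSet (E : Set (Sym2 V))).ConnectedComponent = 2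

/-- The number of spanning trees of the simple graph `G`. -/
noncomputable def treeCount (G : SimpleGraph V) : ℕ :=
  (Finset.univ.filter (fun E : Finset (Sym2 V) => IsSTree G E)).card


/-! ### Auxiliary infrastructure for the proof -/

section Infra

open SimpleGraph

set_option linter.unusedSectionVars false

variable {V : Type*} [Fintype V] [DecidableEq V]

/-- graph of a finite edge set -/
noncomputable abbrev HG (E : Finset (Sym2 V)) : SimpleGraph V :=
  SimpleGraph.fromEdgeSet (E : Set (Sym2 V))

lemma erase_graph_eq (E : Finset (Sym2 V)) (e : Sym2 V) :
    HG (E.erase e) = HG E \ SimpleGraph.fromEdgeSet {e} := by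
  ext a b
  simp only [fromEdgeSet_adj, Finset.coe_erase, Set.mem_diff, Set.mem_singleton_iff,
    sdiff_adj, Finset.mem_coe]
  tauto

lemma not_reach_erase_self {E : Finset (Sym2 V)} (hac : (HG E).IsAcyclic) {x y : V}
    (hxy : s(x, y) ∈ E) (hne : x ≠ y) :
    ¬ (HG (E.erase s(x, y))).Reachable x y := by
  intro hr
  have hadj : (HG E).Adj x y := by
    rw [fromEdgeSet_adj]; exact ⟨by exact_mod_cast hxy, hne⟩
  have h2 : (HG E).Adj x y ∧ (HG E \ SimpleGraph.fromEdgeSet {s(x, y)}).Reachable x y :=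
    ⟨hadj, by rw [← erase_graph_eq]; exact hr⟩
  replace h2 := (SimpleGraph.adj_and_reachable_delete_edges_iff_exists_cycle).1 h2
  obtain ⟨u, c, hc, -⟩ := h2
  exact hac c hc

private lemma reach_erase_or_aux {E : Finset (Sym2 V)} {x y : V} :
    ∀ {z v : V}, (HG E).Walk z v →
      (HG (E.erase s(x, y))).Reachable z v ∨
        ((HG (E.erase s(x, y))).Reachable z x ∨ (HG (E.erase s(x, y))).Reachable z y) := by
  intro z v p
  induction p with
  | nil => exact Or.inl (Reachable.refl _)
  | @cons a b c hab p ih =>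
    by_cases he : s(a, b) = s(x, y)
    · rw [Sym2.eq_iff] at he
      rcases he with ⟨ha, -⟩ | ⟨ha, -⟩
      · exact Or.inr (Or.inl (by rw [ha]))
      · exact Or.inr (Or.inr (by rw [ha]))
    · have hadj : (HG (E.erase s(x, y))).Adj a b := by
        rw [fromEdgeSet_adj] at hab ⊢
        exact ⟨by simpa [he] using hab.1, hab.2⟩
      rcases ih with h | h | h
      · exact Or.inl (hadj.reachable.trans h)
      · exact Or.inr (Or.inl (hadj.reachable.trans h))
      · exact Or.inr (Or.inr (hadj.reachable.trans h))

lemma reach_erase_or {E : Finset (Sym2 V)} {x y z : V} (h : (HG E).Reachable z x) :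
    (HG (E.erase s(x, y))).Reachable z x ∨ (HG (E.erase s(x, y))).Reachable z y := by
  obtain ⟨p⟩ := h
  rcases reach_erase_or_aux p with h | h | h
  · exact Or.inl h
  · exact Or.inl h
  · exact Or.inr h

lemma reach_of_reach_detour {E : Finset (Sym2 V)} {x y : V}
    (hd : (HG (E.erase s(x, y))).Reachable x y) {a b : V} (hab : (HG E).Reachable a b) :
    (HG (E.erase s(x, y))).Reachable a b := by
  obtain ⟨p⟩ := hab
  induction p with
  | nil => exact Reachable.refl _
  | @cons a c b hab p ih =>
    refine Reachable.trans ?_ ih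
    by_cases he : s(a, c) = s(x, y)
    · rw [Sym2.eq_iff] at he
      rcases he with ⟨rfl, rfl⟩ | ⟨rfl, rfl⟩
      · exact hd
      · exact hd.symm
    · have : (HG (E.erase s(x, y))).Adj a c := by
        rw [fromEdgeSet_adj] at hab ⊢
        exact ⟨by simpa [he] using hab.1, hab.2⟩
      exact this.reachable

lemma cc_two_intro (H : SimpleGraph V) {a b : V} (hab : ¬H.Reachable a b)
    (hcov : ∀ z, H.Reachable z a ∨ H.Reachable z b) :
    Nat.card H.ConnectedComponent = 2 := by
  rw [Nat.card_eq_two_iff]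
  refine ⟨H.connectedComponentMk a, H.connectedComponentMk b, ?_, ?_⟩
  · intro h
    exact hab ((SimpleGraph.ConnectedComponent.eq).1 h)
  · apply Set.eq_univ_of_forall
    intro c
    induction c using SimpleGraph.ConnectedComponent.ind with
    | _ z =>
      rcases hcov z with h | h
      · exact Or.inl ((SimpleGraph.ConnectedComponent.eq).2 h)
      · exact Or.inr ((SimpleGraph.ConnectedComponent.eq).2 h)

lemma cc_two_elim (H : SimpleGraph V) (h2 : Nat.card H.ConnectedComponent = 2)
    {a b : V} (hab : ¬H.Reachable a b) (z : V) :
    H.Reachable z a ∨ H.Reachable z b := by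
  rw [Nat.card_eq_two_iff] at h2
  obtain ⟨x, y, -, hcov⟩ := h2
  have hmem : ∀ c : H.ConnectedComponent, c = x ∨ c = y := by
    intro c
    have : c ∈ ({x, y} : Set H.ConnectedComponent) := by rw [hcov]; trivial
    simpa using this
  have hne : H.connectedComponentMk a ≠ H.connectedComponentMk b := by
    intro h
    exact hab ((SimpleGraph.ConnectedComponent.eq).1 h)
  have key : ∀ w : V, H.connectedComponentMk w = H.connectedComponentMk a ∨
      H.connectedComponentMk w = H.connectedComponentMk b := by
    intro w
    rcases hmem (H.connectedComponentMk w) with hw | hw <;>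
      rcases hmem (H.connectedComponentMk a) with ha | ha <;>
      rcases hmem (H.connectedComponentMk b) with hb | hb <;>
      first
        | exact Or.inl (hw.trans ha.symm)
        | exact Or.inr (hw.trans hb.symm)
        | exact absurd (ha.trans hb.symm) hne
  rcases key z with h | h
  · exact Or.inl ((SimpleGraph.ConnectedComponent.eq).1 h)
  · exact Or.inr ((SimpleGraph.ConnectedComponent.eq).1 h)

lemma reach_compl_iff (H : SimpleGraph V) (h2 : Nat.card H.ConnectedComponent = 2)
    {a b : V} (hab : ¬H.Reachable a b) (z : V) :
    ¬H.Reachable z a ↔ H.Reachable z b := by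
  constructor
  · intro h
    exact (cc_two_elim H h2 hab z).resolve_left h
  · intro h h'
    exact hab (h'.symm.trans h)

lemma isAcyclic_mono {H K : SimpleGraph V} (h : H ≤ K) (hK : K.IsAcyclic) : H.IsAcyclic := by
  intro v c hc
  have hsub : ∀ e ∈ c.edges, e ∈ K.edgeSet := fun e he =>
    edgeSet_mono h (c.edges_subset_edgeSet he)
  exact hK (c.transfer K hsub) (hc.transfer hsub)

lemma HG_mono {E F : Finset (Sym2 V)} (h : E ⊆ F) : HG E ≤ HG F :=
  SimpleGraph.fromEdgeSet_mono (by exact_mod_cast h)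

lemma ne_of_mem_edgeSet {G : SimpleGraph V} {x y : V} (h : s(x, y) ∈ G.edgeSet) : x ≠ y :=
  fun he => G.not_isDiag_of_mem_edgeSet h (by simp [he])

lemma insert_acyclic_of_not_reach {F : Finset (Sym2 V)} {x y : V}
    (hac : (HG F).IsAcyclic) (hnr : ¬(HG F).Reachable x y) (hne : x ≠ y) :
    (HG (insert s(x, y) F)).IsAcyclic := by
  intro v c hc
  by_cases he : s(x, y) ∈ c.edges
  · have hadj : (HG (insert s(x, y) F)).Adj x y := by
      rw [fromEdgeSet_adj]
      exact ⟨by simp, hne⟩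
    have : (HG (insert s(x, y) F)).Adj x y ∧
        (HG (insert s(x, y) F) \ SimpleGraph.fromEdgeSet {s(x, y)}).Reachable x y :=
      (SimpleGraph.adj_and_reachable_delete_edges_iff_exists_cycle).2 ⟨v, c, hc, he⟩
    apply hnr
    refine this.2.mono ?_
    intro a b hab
    rw [sdiff_adj, fromEdgeSet_adj, fromEdgeSet_adj] at hab
    rcases hab with ⟨⟨h1, h2⟩, h3⟩
    have : s(a, b) ≠ s(x, y) := fun hh => h3 ⟨by simp [hh], h2⟩
    rw [fromEdgeSet_adj]
    refine ⟨?_, h2⟩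
    simp only [Finset.coe_insert, Set.mem_insert_iff, Finset.mem_coe] at h1
    rcases h1 with h1 | h1
    · exact absurd h1 this
    · exact_mod_cast h1
  · have hsub : ∀ e ∈ c.edges, e ∈ (HG F).edgeSet := by
      intro e hee
      have h1 := c.edges_subset_edgeSet hee
      rw [edgeSet_fromEdgeSet] at h1 ⊢
      refine ⟨?_, h1.2⟩
      have := h1.1
      simp only [Finset.coe_insert, Set.mem_insert_iff, Finset.mem_coe] at this
      rcases this with h | h
      · exact absurd (h ▸ hee) he
      · exact_mod_cast h
    exact hac (c.transfer _ hsub) (hc.transfer hsub)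

end Infra

section Infra2

open SimpleGraph

set_option linter.unusedSectionVars false
set_option maxHeartbeats 1000000

variable {V : Type*} [Fintype V] [DecidableEq V] {G : SimpleGraph V}

lemma IsSTree.acyclic {T : Finset (Sym2 V)} (h : IsSTree G T) : (HG T).IsAcyclic := h.2.1
lemma IsSTree.conn {T : Finset (Sym2 V)} (h : IsSTree G T) : (HG T).Connected := h.2.2
lemma IsSTree.subset {T : Finset (Sym2 V)} (h : IsSTree G T) : ↑T ⊆ G.edgeSet := h.1

lemma edge_ne_of_mem {T : Finset (Sym2 V)} (hsub : ↑T ⊆ G.edgeSet) {x y : V}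
    (hxy : s(x, y) ∈ T) : x ≠ y :=
  ne_of_mem_edgeSet (hsub (by exact_mod_cast hxy))

/-- removing an edge from a spanning tree yields a spanning 2-forest -/
lemma tree_erase_twoforest {T : Finset (Sym2 V)} (hT : IsSTree G T) {x y : V}
    (hxy : s(x, y) ∈ T) : IsSTwoForest G (T.erase s(x, y)) := by
  have hne : x ≠ y := edge_ne_of_mem hT.subset hxy
  refine ⟨Set.Subset.trans ?_ hT.subset, isAcyclic_mono (HG_mono (Finset.erase_subset _ _)) hT.acyclic, ?_⟩
  · exact_mod_cast (fun e he => Finset.mem_of_mem_erase (by exact_mod_cast he))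
  · exact cc_two_intro _ (not_reach_erase_self hT.acyclic hxy hne)
      (fun z => reach_erase_or (hT.conn.preconnected z x))

/-- adding a cross edge to a spanning 2-forest yields a spanning tree -/
lemma forest_insert_tree {F : Finset (Sym2 V)} (hF : IsSTwoForest G F) {x y : V}
    (hadj : G.Adj x y) (hnr : ¬(HG F).Reachable x y) : IsSTree G (insert s(x, y) F) := by
  obtain ⟨hsub, hac, h2⟩ := hF
  refine ⟨?_, insert_acyclic_of_not_reach hac hnr hadj.ne, ?_⟩
  · intro e he
    simp only [Finset.coe_insert, Set.mem_insert_iff] at he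
    rcases he with rfl | he
    · exact hadj
    · exact hsub (by exact_mod_cast he)
  · have hxy' : (HG (insert s(x, y) F)).Adj x y := by
      rw [fromEdgeSet_adj]; exact ⟨by simp, hadj.ne⟩
    have hmono : HG F ≤ HG (insert s(x, y) F) := HG_mono (Finset.subset_insert _ _)
    have hnom : Nonempty V := ⟨x⟩
    refine ⟨fun a b => ?_⟩
    have ha := cc_two_elim _ h2 hnr a
    have hb := cc_two_elim _ h2 hnr b
    have hxyr : (HG (insert s(x, y) F)).Reachable x y := hxy'.reachable
    rcases ha with ha | ha <;> rcases hb with hb | hb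
    · exact ((ha.mono hmono)).trans ((hb.mono hmono)).symm
    · exact ((ha.mono hmono)).trans (hxyr.trans ((hb.mono hmono)).symm)
    · exact ((ha.mono hmono)).trans (hxyr.symm.trans ((hb.mono hmono)).symm)
    · exact ((ha.mono hmono)).trans ((hb.mono hmono)).symm

lemma not_mem_of_not_reach {F : Finset (Sym2 V)} {x y : V} (hne : x ≠ y)
    (hnr : ¬(HG F).Reachable x y) : s(x, y) ∉ F := by
  intro h
  have : (HG F).Adj x y := by rw [fromEdgeSet_adj]; exact ⟨by exact_mod_cast h, hne⟩
  exact hnr this.reachable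

/-- existence of a spanning tree -/
lemma exists_spanning_tree (hconn : G.Connected) : ∃ T : Finset (Sym2 V), IsSTree G T := by
  have main : ∀ n (E : Finset (Sym2 V)), E.card = n → ↑E ⊆ G.edgeSet →
      (HG E).Connected → ∃ T : Finset (Sym2 V), IsSTree G T := by
    intro n
    induction n using Nat.strong_induction_on with
    | _ n ih =>
      intro E hcard hsub hc
      by_cases hac : (HG E).IsAcyclic
      · exact ⟨E, hsub, hac, hc⟩
      · rw [SimpleGraph.IsAcyclic] at hac
        push_neg at hac
        obtain ⟨v, c, hc'⟩ := hac
        have hlen : c.edges ≠ [] := by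
          have h3 := hc'.three_le_length
          intro h
          rw [← Walk.length_edges, h] at h3
          simp at h3
        obtain ⟨e, he⟩ := List.exists_mem_of_ne_nil _ hlen
        induction e using Sym2.ind with
        | _ x y =>
          have hedge : (HG E).Adj x y ∧
              (HG E \ SimpleGraph.fromEdgeSet {s(x, y)}).Reachable x y :=
            (SimpleGraph.adj_and_reachable_delete_edges_iff_exists_cycle).2 ⟨v, c, hc', he⟩
          have hmem : s(x, y) ∈ E := by
            have := hedge.1
            rw [fromEdgeSet_adj] at this
            exact_mod_cast this.1
          have hdet : (HG (E.erase s(x, y))).Reachable x y := by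
            rw [erase_graph_eq]; exact hedge.2
          refine ih (E.erase s(x, y)).card ?_ _ rfl ?_ ?_
          · rw [← hcard]; exact Finset.card_erase_lt_of_mem hmem
          · exact Set.Subset.trans (by exact_mod_cast (fun e he =>
              Finset.mem_of_mem_erase (by exact_mod_cast he))) hsub
          · have hnom : Nonempty V := ⟨x⟩
            exact ⟨fun a b => reach_of_reach_detour hdet (hc.preconnected a b)⟩
  have hE : (↑G.edgeFinset : Set (Sym2 V)) = G.edgeSet := by simp
  refine main _ G.edgeFinset rfl (by rw [hE]) ?_
  rw [show HG G.edgeFinset = G by rw [HG, hE, fromEdgeSet_edgeSet]]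
  exact hconn

lemma treeCount_pos (hconn : G.Connected) : 0 < treeCount G := by
  obtain ⟨T, hT⟩ := exists_spanning_tree hconn
  rw [treeCount, Finset.card_pos]
  exact ⟨T, by simp [hT]⟩

end Infra2

section Branch

open SimpleGraph

set_option linter.unusedSectionVars false
set_option maxHeartbeats 1000000

variable {V : Type*} [Fintype V] [DecidableEq V] {G : SimpleGraph V}

/-- a walk avoiding the vertex `u` transfers from `T.erase s(u,y')` to `T.erase s(u,y)` -/
private lemma walk_avoid_transfer {T : Finset (Sym2 V)} {u y y' z w : V}
    (p : (HG (T.erase s(u, y'))).Walk z w) (hu : u ∉ p.support) :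
    (HG (T.erase s(u, y))).Reachable z w := by
  have hsub : ∀ e ∈ p.edges, e ∈ (HG (T.erase s(u, y))).edgeSet := by
    intro e hee
    have h1 := p.edges_subset_edgeSet hee
    rw [edgeSet_fromEdgeSet] at h1 ⊢
    refine ⟨?_, h1.2⟩
    have h2 : e ∈ T.erase s(u, y') := by exact_mod_cast h1.1
    have h3 : e ∈ T := Finset.mem_of_mem_erase h2
    have hne : e ≠ s(u, y) := by
      intro rfl'
      subst rfl'
      exact hu (p.fst_mem_support_of_mem_edges hee)
    exact_mod_cast Finset.mem_erase.2 ⟨hne, h3⟩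
  exact ⟨p.transfer _ hsub⟩

/-- every vertex `z ≠ u` lies in exactly one branch of the tree at `u` -/
lemma branch_existsUnique {T : Finset (Sym2 V)} (hT : IsSTree G T) {u z : V} (hz : z ≠ u) :
    ∃! y : V, s(u, y) ∈ T ∧ (HG (T.erase s(u, y))).Reachable z y := by
  -- existence
  obtain ⟨p0⟩ := hT.conn.preconnected u z
  obtain ⟨p, hp⟩ := p0.toPath
  have hex : ∃ y : V, s(u, y) ∈ T ∧ (HG (T.erase s(u, y))).Reachable z y := by
    cases p with
    | nil => exact absurd rfl hz.symm
    | @cons _ y _ h q =>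
      rw [Walk.cons_isPath_iff] at hp
      have hmem : s(u, y) ∈ T := by
        rw [fromEdgeSet_adj] at h
        exact_mod_cast h.1
      refine ⟨y, hmem, ?_⟩
      have hsub : ∀ e ∈ q.edges, e ∈ (HG (T.erase s(u, y))).edgeSet := by
        intro e hee
        have h1 := q.edges_subset_edgeSet hee
        rw [edgeSet_fromEdgeSet] at h1 ⊢
        refine ⟨?_, h1.2⟩
        have h3 : e ∈ T := by exact_mod_cast h1.1
        have hne : e ≠ s(u, y) := by
          intro rfl'
          subst rfl'
          exact hp.2 (q.fst_mem_support_of_mem_edges hee)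
        exact_mod_cast Finset.mem_erase.2 ⟨hne, h3⟩
      exact ⟨(q.transfer _ hsub).reverse⟩
  obtain ⟨y, hy1, hy2⟩ := hex
  refine ⟨y, ⟨hy1, hy2⟩, ?_⟩
  -- uniqueness
  intro y' ⟨hy'1, hy'2⟩
  by_contra hne
  have hney : u ≠ y := edge_ne_of_mem hT.subset hy1
  have hney' : u ≠ y' := edge_ne_of_mem hT.subset hy'1
  have hbr : ¬(HG (T.erase s(u, y))).Reachable u y :=
    not_reach_erase_self hT.acyclic hy1 hney
  have hbr' : ¬(HG (T.erase s(u, y'))).Reachable u y' :=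
    not_reach_erase_self hT.acyclic hy'1 hney'
  -- a walk z → y' in T - uy' avoids u, so transfers to T - uy
  obtain ⟨q⟩ := hy'2
  have hu : u ∉ q.support := by
    intro hu
    exact hbr' ⟨q.dropUntil u hu⟩
  have hr1 : (HG (T.erase s(u, y))).Reachable z y' := walk_avoid_transfer q hu
  -- now u ~ y' in T - uy, and y' ~ z ~ y, so u reaches y in T - uy : contradiction
  have hadj : (HG (T.erase s(u, y))).Adj u y' := by
    rw [fromEdgeSet_adj]
    refine ⟨?_, hney'⟩
    have : s(u, y') ≠ s(u, y) := by
      intro h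
      rw [Sym2.congr_right] at h
      exact hne h
    exact_mod_cast Finset.mem_erase.2 ⟨this, hy'1⟩
  exact hbr (hadj.reachable.trans (hr1.symm.trans hy2))

end Branch

section Sums

open SimpleGraph

set_option linter.unusedSectionVars false
set_option maxHeartbeats 1000000

variable {V : Type*} [Fintype V] [DecidableEq V]

/-- real degree -/
noncomputable def dd (G : SimpleGraph V) [DecidableRel G.Adj] (z : V) : ℝ := (G.degree z : ℝ)

/-- total volume -/
noncomputable def volG (G : SimpleGraph V) [DecidableRel G.Adj] : ℝ := ∑ z, dd G z

/-- volume of the component of `a` in the subgraph with edge set `E` -/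
noncomputable def cvol (G : SimpleGraph V) [DecidableRel G.Adj] (E : Finset (Sym2 V)) (a : V) :
    ℝ := ∑ z ∈ Finset.univ.filter (fun z => (HG E).Reachable z a), dd G z

/-- combinatorial Laplacian entries -/
noncomputable def LL (G : SimpleGraph V) [DecidableRel G.Adj] (u v : V) : ℝ :=
  (if u = v then dd G u else 0) - (if G.Adj u v then 1 else 0)

/-- the forest polynomial entry -/
noncomputable def Qm (G : SimpleGraph V) [DecidableRel G.Adj] (u v : V) : ℝ :=
  (∑ E ∈ Finset.univ.filter (fun E : Finset (Sym2 V) =>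
        IsSTwoForest G E ∧ (SimpleGraph.fromEdgeSet (E : Set (Sym2 V))).Reachable u v),
      (∑ z ∈ Finset.univ.filter (fun z : V =>
          ¬ (SimpleGraph.fromEdgeSet (E : Set (Sym2 V))).Reachable z u),
        (G.degree z : ℝ)) ^ 2)
   - (∑ E ∈ Finset.univ.filter (fun E : Finset (Sym2 V) =>
        IsSTwoForest G E ∧ ¬ (SimpleGraph.fromEdgeSet (E : Set (Sym2 V))).Reachable u v),
      (∑ z ∈ Finset.univ.filter (fun z : V =>
          (SimpleGraph.fromEdgeSet (E : Set (Sym2 V))).Reachable z u),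
        (G.degree z : ℝ)) *
      (∑ z ∈ Finset.univ.filter (fun z : V =>
          (SimpleGraph.fromEdgeSet (E : Set (Sym2 V))).Reachable z v),
        (G.degree z : ℝ)))

/-- per-forest entry -/
noncomputable def qE (G : SimpleGraph V) [DecidableRel G.Adj] (E : Finset (Sym2 V)) (v w : V) :
    ℝ := if (HG E).Reachable v w then (volG G - cvol G E w) ^ 2
      else -(cvol G E v * cvol G E w)

variable {G : SimpleGraph V} [DecidableRel G.Adj]

lemma cvol_congr {E : Finset (Sym2 V)} {a b : V} (h : (HG E).Reachable a b) :
    cvol G E a = cvol G E b := by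
  unfold cvol
  apply Finset.sum_congr _ (fun _ _ => rfl)
  apply Finset.filter_congr
  intro z _
  constructor
  · exact fun hz => hz.trans h
  · exact fun hz => hz.trans h.symm

lemma cvol_filter_not {E : Finset (Sym2 V)} {a : V} :
    ∑ z ∈ Finset.univ.filter (fun z => ¬(HG E).Reachable z a), dd G z
      = volG G - cvol G E a := by
  rw [eq_sub_iff_add_eq, add_comm]
  exact Finset.sum_filter_add_sum_filter_not _ _ _

lemma cvol_compl {E : Finset (Sym2 V)} (hE : IsSTwoForest G E) {a b : V}
    (hab : ¬(HG E).Reachable a b) :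
    cvol G E b = volG G - cvol G E a := by
  rw [← cvol_filter_not]
  unfold cvol
  apply Finset.sum_congr _ (fun _ _ => rfl)
  apply Finset.filter_congr
  intro z _
  exact (reach_compl_iff _ hE.2.2 hab z).symm

/-- `Qm` as a single sum over two-forests -/
lemma Qm_eq (v w : V) :
    Qm G v w = ∑ E ∈ Finset.univ.filter (fun E : Finset (Sym2 V) => IsSTwoForest G E),
      qE G E v w := by
  unfold Qm qE
  rw [Finset.sum_ite, sub_eq_add_neg]
  congr 1
  · rw [Finset.filter_filter]
    apply Finset.sum_congr rfl
    intro E hE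
    rw [Finset.mem_filter] at hE
    have h1 : ∑ z ∈ Finset.univ.filter
        (fun z => ¬(SimpleGraph.fromEdgeSet (E : Set (Sym2 V))).Reachable z v),
        (G.degree z : ℝ) = volG G - cvol G E v := cvol_filter_not
    rw [h1, cvol_congr hE.2.2]
  · rw [Finset.filter_filter, ← Finset.sum_neg_distrib]
    apply Finset.sum_congr rfl
    intro E hE
    simp only [cvol, dd]

end Sums

section KD

open SimpleGraph

set_option linter.unusedSectionVars false
set_option maxHeartbeats 1000000

variable {V : Type*} [Fintype V] [DecidableEq V] {G : SimpleGraph V} [DecidableRel G.Adj]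

lemma filter_reach_comm (E : Finset (Sym2 V)) (u : V) :
    Finset.univ.filter (fun v => (HG E).Reachable u v)
      = Finset.univ.filter (fun v => (HG E).Reachable v u) :=
  Finset.filter_congr (fun v _ => by constructor <;> exact Reachable.symm)

lemma filter_not_reach_comm (E : Finset (Sym2 V)) (u : V) :
    Finset.univ.filter (fun v => ¬(HG E).Reachable u v)
      = Finset.univ.filter (fun v => ¬(HG E).Reachable v u) :=
  Finset.filter_congr (fun v _ => by
    constructor <;> exact fun h h' => h h'.symm)

lemma sum_dd_reach (E : Finset (Sym2 V)) (u : V) :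
    ∑ v ∈ Finset.univ.filter (fun v => (HG E).Reachable u v), dd G v = cvol G E u := by
  rw [filter_reach_comm]; rfl

lemma sum_dd_not_reach (E : Finset (Sym2 V)) (u : V) :
    ∑ v ∈ Finset.univ.filter (fun v => ¬(HG E).Reachable u v), dd G v
      = volG G - cvol G E u := by
  rw [filter_not_reach_comm]; exact cvol_filter_not

lemma qE_d_sum {E : Finset (Sym2 V)} (hE : IsSTwoForest G E) (u : V) :
    ∑ v, dd G v * qE G E u v = 0 := by
  simp only [qE, mul_ite]
  rw [Finset.sum_ite]
  have hA : ∑ v ∈ Finset.univ.filter (fun v => (HG E).Reachable u v),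
      dd G v * (volG G - cvol G E v) ^ 2 = cvol G E u * (volG G - cvol G E u) ^ 2 := by
    have h1 : (∑ v ∈ Finset.univ.filter (fun v => (HG E).Reachable u v),
        dd G v * (volG G - cvol G E v) ^ 2)
        = ∑ v ∈ Finset.univ.filter (fun v => (HG E).Reachable u v),
            dd G v * (volG G - cvol G E u) ^ 2 :=
      Finset.sum_congr rfl (fun v hv => by
        rw [Finset.mem_filter] at hv
        rw [cvol_congr hv.2.symm])
    rw [h1, ← Finset.sum_mul, sum_dd_reach]
  have hB : ∑ v ∈ Finset.univ.filter (fun v => ¬(HG E).Reachable u v),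
      dd G v * -(cvol G E u * cvol G E v)
      = (volG G - cvol G E u) * -(cvol G E u * (volG G - cvol G E u)) := by
    have h1 : (∑ v ∈ Finset.univ.filter (fun v => ¬(HG E).Reachable u v),
        dd G v * -(cvol G E u * cvol G E v))
        = ∑ v ∈ Finset.univ.filter (fun v => ¬(HG E).Reachable u v),
            dd G v * -(cvol G E u * (volG G - cvol G E u)) :=
      Finset.sum_congr rfl (fun v hv => by
        rw [Finset.mem_filter] at hv
        rw [cvol_compl hE hv.2])
    rw [h1, ← Finset.sum_mul, sum_dd_not_reach]
  rw [hA, hB]; ring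

lemma KD (u : V) : ∑ v, dd G v * Qm G u v = 0 := by
  have h1 : ∀ v, Qm G u v = ∑ E ∈ Finset.univ.filter
      (fun E : Finset (Sym2 V) => IsSTwoForest G E), qE G E u v := fun v => Qm_eq u v
  calc ∑ v, dd G v * Qm G u v
      = ∑ v, ∑ E ∈ Finset.univ.filter (fun E : Finset (Sym2 V) => IsSTwoForest G E),
          dd G v * qE G E u v := by
        apply Finset.sum_congr rfl
        intro v _
        rw [h1 v, Finset.mul_sum]
    _ = ∑ E ∈ Finset.univ.filter (fun E : Finset (Sym2 V) => IsSTwoForest G E),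
          ∑ v, dd G v * qE G E u v := Finset.sum_comm
    _ = 0 := by
        apply Finset.sum_eq_zero
        intro E hE
        rw [Finset.mem_filter] at hE
        exact qE_d_sum hE.2 u

end KD

section S1sec

open SimpleGraph

set_option linter.unusedSectionVars false
set_option maxHeartbeats 1000000

variable {V : Type*} [Fintype V] [DecidableEq V] {G : SimpleGraph V} [DecidableRel G.Adj]

lemma sum_adj_ite (u : V) : ∑ y, (if G.Adj u y then (1 : ℝ) else 0) = dd G u := by
  rw [Finset.sum_boole]
  unfold dd
  congr 1
  rw [SimpleGraph.degree]
  congr 1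
  ext y
  simp [SimpleGraph.mem_neighborFinset]

lemma sum_adj_ite' (w : V) : ∑ v, (if G.Adj v w then (1 : ℝ) else 0) = dd G w := by
  rw [← sum_adj_ite w]
  apply Finset.sum_congr rfl
  intro v _
  exact if_congr (G.adj_comm v w) rfl rfl

lemma LL_row_sum (u : V) : ∑ v, LL G u v = 0 := by
  unfold LL
  rw [Finset.sum_sub_distrib, sum_adj_ite, Finset.sum_ite_eq]
  simp

lemma LL_col_sum (w : V) : ∑ v, LL G v w = 0 := by
  unfold LL
  rw [Finset.sum_sub_distrib, sum_adj_ite']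
  have : ∑ v, (if v = w then dd G v else 0) = dd G w := by
    rw [Finset.sum_ite_eq']; simp
  rw [this, sub_self]

lemma sigmaT_eq (E : Finset (Sym2 V)) (u w : V) :
    ∑ v ∈ Finset.univ.filter (fun v => ¬(HG E).Reachable v w), LL G u v
      = (if ¬(HG E).Reachable u w then dd G u else 0)
        - ∑ y, (if G.Adj u y ∧ ¬(HG E).Reachable y w then (1 : ℝ) else 0) := by
  unfold LL
  rw [Finset.sum_sub_distrib]
  congr 1
  · rw [Finset.sum_ite_eq]
    simp
  · rw [Finset.sum_filter]
    apply Finset.sum_congr rfl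
    intro v _
    by_cases h1 : G.Adj u v <;> by_cases h2 : (HG E).Reachable v w <;> simp [h1, h2]

lemma S1 {E : Finset (Sym2 V)} (hE : IsSTwoForest G E) (u w : V) :
    ∑ v, LL G u v * qE G E v w
      = -volG G * (volG G - cvol G E w) *
          (∑ v ∈ Finset.univ.filter (fun v => ¬(HG E).Reachable v w), LL G u v) := by
  simp only [qE, mul_ite]
  rw [Finset.sum_ite]
  have hS : ∑ v ∈ Finset.univ.filter (fun v => (HG E).Reachable v w), LL G u v
      = - ∑ v ∈ Finset.univ.filter (fun v => ¬(HG E).Reachable v w), LL G u v := by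
    have h1 := Finset.sum_filter_add_sum_filter_not Finset.univ
      (fun v => (HG E).Reachable v w) (LL G u)
    have h0 : ∑ v, LL G u v = 0 := LL_row_sum u
    rw [h0] at h1
    linarith
  have hA : ∑ v ∈ Finset.univ.filter (fun v => (HG E).Reachable v w),
      LL G u v * (volG G - cvol G E w) ^ 2
      = (∑ v ∈ Finset.univ.filter (fun v => (HG E).Reachable v w), LL G u v)
          * (volG G - cvol G E w) ^ 2 := (Finset.sum_mul _ _ _).symm
  have hB1 : ∑ v ∈ Finset.univ.filter (fun v => ¬(HG E).Reachable v w),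
      LL G u v * -(cvol G E v * cvol G E w)
      = ∑ v ∈ Finset.univ.filter (fun v => ¬(HG E).Reachable v w),
          LL G u v * -((volG G - cvol G E w) * cvol G E w) :=
    Finset.sum_congr rfl (fun v hv => by
      rw [Finset.mem_filter] at hv
      rw [cvol_compl hE (fun h => hv.2 h.symm)])
  have hB : ∑ v ∈ Finset.univ.filter (fun v => ¬(HG E).Reachable v w),
      LL G u v * -((volG G - cvol G E w) * cvol G E w)
      = (∑ v ∈ Finset.univ.filter (fun v => ¬(HG E).Reachable v w), LL G u v)
          * -((volG G - cvol G E w) * cvol G E w) := (Finset.sum_mul _ _ _).symm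
  rw [hA, hB1, hB, hS]
  ring

end S1sec

section PTsec

open SimpleGraph

set_option linter.unusedSectionVars false
set_option maxHeartbeats 1000000

variable {V : Type*} [Fintype V] [DecidableEq V] {G : SimpleGraph V} [DecidableRel G.Adj]

lemma SB {T : Finset (Sym2 V)} (hT : IsSTree G T) (u : V) :
    ∑ y, (if s(u, y) ∈ T then cvol G (T.erase s(u, y)) y else 0) = volG G - dd G u := by
  have step1 : ∀ y : V, (if s(u, y) ∈ T then cvol G (T.erase s(u, y)) y else 0)
      = ∑ z, (if s(u, y) ∈ T ∧ (HG (T.erase s(u, y))).Reachable z y then dd G z else 0) := by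
    intro y
    by_cases h : s(u, y) ∈ T
    · simp only [h, if_true, true_and]
      unfold cvol
      rw [Finset.sum_filter]
    · simp [h]
  rw [Finset.sum_congr rfl (fun y _ => step1 y), Finset.sum_comm]
  have step2 : ∀ z : V,
      (∑ y, if s(u, y) ∈ T ∧ (HG (T.erase s(u, y))).Reachable z y then dd G z else 0)
      = if z = u then 0 else dd G z := by
    intro z
    by_cases hz : z = u
    · subst hz
      rw [if_pos rfl]
      apply Finset.sum_eq_zero
      intro y _
      rw [if_neg]
      rintro ⟨h1, h2⟩
      exact not_reach_erase_self hT.acyclic h1 (edge_ne_of_mem hT.subset h1) h2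
    · obtain ⟨y0, hy0, hy0u⟩ := branch_existsUnique hT hz
      have hcond : ∀ y : V,
          (s(u, y) ∈ T ∧ (HG (T.erase s(u, y))).Reachable z y) ↔ y = y0 := by
        intro y
        constructor
        · intro h; exact hy0u y h
        · rintro rfl; exact hy0
      rw [Finset.sum_congr rfl (fun y _ => if_congr (hcond y) rfl rfl), Finset.sum_ite_eq']
      simp [hz]
  rw [Finset.sum_congr rfl (fun z _ => step2 z)]
  have hlast : ∀ z : V, (if z = u then 0 else dd G z)
      = dd G z - (if z = u then dd G z else 0) := by
    intro z; by_cases h : z = u <;> simp [h]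
  rw [Finset.sum_congr rfl (fun z _ => hlast z), Finset.sum_sub_distrib, Finset.sum_ite_eq']
  simp [volG]

lemma PT {T : Finset (Sym2 V)} (hT : IsSTree G T) (u w : V) :
    (∑ y, if s(u, y) ∈ T ∧ (HG (T.erase s(u, y))).Reachable y w
        then cvol G (T.erase s(u, y)) u else 0)
      - (∑ y, if s(u, y) ∈ T ∧ (HG (T.erase s(u, y))).Reachable u w
        then cvol G (T.erase s(u, y)) y else 0)
      = dd G u - volG G * (if u = w then 1 else 0) := by
  by_cases huw : u = w
  · subst huw
    have h1 : (∑ y, if s(u, y) ∈ T ∧ (HG (T.erase s(u, y))).Reachable y u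
        then cvol G (T.erase s(u, y)) u else 0) = 0 := by
      apply Finset.sum_eq_zero
      intro y _
      rw [if_neg]
      rintro ⟨h1, h2⟩
      exact not_reach_erase_self hT.acyclic h1 (edge_ne_of_mem hT.subset h1) h2.symm
    have h2 : (∑ y, if s(u, y) ∈ T ∧ (HG (T.erase s(u, y))).Reachable u u
        then cvol G (T.erase s(u, y)) y else 0) = volG G - dd G u := by
      rw [← SB hT u]
      exact Finset.sum_congr rfl (fun y _ => if_congr (and_iff_left (Reachable.refl u)) rfl rfl)
    rw [h1, h2]
    simp
  · obtain ⟨y0, ⟨hy0T, hy0r⟩, hy0u⟩ := branch_existsUnique hT (fun h => huw h.symm)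
    have hbr0 : ¬(HG (T.erase s(u, y0))).Reachable u y0 :=
      not_reach_erase_self hT.acyclic hy0T (edge_ne_of_mem hT.subset hy0T)
    have hc1 : ∀ y : V, (s(u, y) ∈ T ∧ (HG (T.erase s(u, y))).Reachable y w) ↔ y = y0 := by
      intro y
      constructor
      · rintro ⟨h1, h2⟩
        exact hy0u y ⟨h1, h2.symm⟩
      · rintro rfl
        exact ⟨hy0T, hy0r.symm⟩
    have h1 : (∑ y, if s(u, y) ∈ T ∧ (HG (T.erase s(u, y))).Reachable y w
        then cvol G (T.erase s(u, y)) u else 0) = cvol G (T.erase s(u, y0)) u := by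
      rw [Finset.sum_congr rfl (fun y _ => if_congr (hc1 y) rfl rfl), Finset.sum_ite_eq']
      simp
    have hc2 : ∀ y : V, (s(u, y) ∈ T ∧ (HG (T.erase s(u, y))).Reachable u w)
        ↔ (s(u, y) ∈ T ∧ y ≠ y0) := by
      intro y
      constructor
      · rintro ⟨h1, h2⟩
        refine ⟨h1, ?_⟩
        rintro rfl
        exact hbr0 (h2.trans hy0r)
      · rintro ⟨h1, h2⟩
        refine ⟨h1, ?_⟩
        rcases reach_erase_or (E := T) (y := y) (hT.conn.preconnected w u) with h | h
        · exact h.symm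
        · exact absurd (hy0u y ⟨h1, h⟩) h2
    have h2 : (∑ y, if s(u, y) ∈ T ∧ (HG (T.erase s(u, y))).Reachable u w
        then cvol G (T.erase s(u, y)) y else 0)
        = (volG G - dd G u) - cvol G (T.erase s(u, y0)) y0 := by
      rw [Finset.sum_congr rfl (fun y _ => if_congr (hc2 y) rfl rfl)]
      have hsplit : ∀ y : V,
          (if s(u, y) ∈ T ∧ y ≠ y0 then cvol G (T.erase s(u, y)) y else 0)
          = (if s(u, y) ∈ T then cvol G (T.erase s(u, y)) y else 0)
            - (if y = y0 then (if s(u, y) ∈ T then cvol G (T.erase s(u, y)) y else 0)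
              else 0) := by
        intro y
        by_cases ha : s(u, y) ∈ T <;> by_cases hb : y = y0 <;> simp [ha, hb]
      rw [Finset.sum_congr rfl (fun y _ => hsplit y), Finset.sum_sub_distrib, SB hT u,
        Finset.sum_ite_eq']
      simp [hy0T]
    rw [h1, h2]
    have hcompl : cvol G (T.erase s(u, y0)) u = volG G - cvol G (T.erase s(u, y0)) y0 :=
      cvol_compl (tree_erase_twoforest hT hy0T) (fun h => hbr0 h.symm)
    rw [hcompl]
    simp [huw]

end PTsec

section Exchange

open SimpleGraph

set_option linter.unusedSectionVars false
set_option maxHeartbeats 1000000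

variable {V : Type*} [Fintype V] [DecidableEq V] {G : SimpleGraph V} [DecidableRel G.Adj]

lemma exchange_c (u w y : V) :
    (∑ E ∈ Finset.univ.filter (fun E : Finset (Sym2 V) => IsSTwoForest G E),
      if G.Adj u y ∧ ¬(HG E).Reachable u w ∧ (HG E).Reachable y w then cvol G E u else 0)
    = ∑ T ∈ Finset.univ.filter (fun T : Finset (Sym2 V) => IsSTree G T),
      if s(u, y) ∈ T ∧ (HG (T.erase s(u, y))).Reachable y w
        then cvol G (T.erase s(u, y)) u else 0 := by
  rw [← Finset.sum_filter, ← Finset.sum_filter]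
  refine Finset.sum_nbij' (fun E => insert s(u, y) E) (fun T => T.erase s(u, y))
    ?_ ?_ ?_ ?_ ?_
  · intro E hE
    simp only [Finset.mem_filter, Finset.mem_univ, true_and] at hE ⊢
    obtain ⟨hF, hadj, hnuw, hyw⟩ := hE
    have hnuy : ¬(HG E).Reachable u y := fun h => hnuw (h.trans hyw)
    have hnm : s(u, y) ∉ E := not_mem_of_not_reach hadj.ne hnuy
    refine ⟨forest_insert_tree hF hadj hnuy, Finset.mem_insert_self _ _, ?_⟩
    rw [Finset.erase_insert hnm]
    exact hyw
  · intro T hT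
    simp only [Finset.mem_filter, Finset.mem_univ, true_and] at hT ⊢
    obtain ⟨hT', hmem, hyw⟩ := hT
    have hadj : G.Adj u y := (SimpleGraph.mem_edgeSet G).1 (hT'.subset (by exact_mod_cast hmem))
    have hbr : ¬(HG (T.erase s(u, y))).Reachable u y :=
      not_reach_erase_self hT'.acyclic hmem hadj.ne
    refine ⟨tree_erase_twoforest hT' hmem, hadj, ?_, hyw⟩
    exact fun h => hbr (h.trans hyw.symm)
  · intro E hE
    simp only [Finset.mem_filter, Finset.mem_univ, true_and] at hE
    obtain ⟨hF, hadj, hnuw, hyw⟩ := hE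
    exact Finset.erase_insert (not_mem_of_not_reach hadj.ne (fun h => hnuw (h.trans hyw)))
  · intro T hT
    simp only [Finset.mem_filter, Finset.mem_univ, true_and] at hT
    exact Finset.insert_erase hT.2.1
  · intro E hE
    simp only [Finset.mem_filter, Finset.mem_univ, true_and] at hE
    obtain ⟨hF, hadj, hnuw, hyw⟩ := hE
    rw [Finset.erase_insert (not_mem_of_not_reach hadj.ne (fun h => hnuw (h.trans hyw)))]

lemma exchange_a (u w y : V) :
    (∑ E ∈ Finset.univ.filter (fun E : Finset (Sym2 V) => IsSTwoForest G E),
      if G.Adj u y ∧ (HG E).Reachable u w ∧ ¬(HG E).Reachable y w then cvol G E y else 0)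
    = ∑ T ∈ Finset.univ.filter (fun T : Finset (Sym2 V) => IsSTree G T),
      if s(u, y) ∈ T ∧ (HG (T.erase s(u, y))).Reachable u w
        then cvol G (T.erase s(u, y)) y else 0 := by
  rw [← Finset.sum_filter, ← Finset.sum_filter]
  refine Finset.sum_nbij' (fun E => insert s(u, y) E) (fun T => T.erase s(u, y))
    ?_ ?_ ?_ ?_ ?_
  · intro E hE
    simp only [Finset.mem_filter, Finset.mem_univ, true_and] at hE ⊢
    obtain ⟨hF, hadj, huw, hnyw⟩ := hE
    have hnuy : ¬(HG E).Reachable u y := fun h => hnyw (h.symm.trans huw)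
    have hnm : s(u, y) ∉ E := not_mem_of_not_reach hadj.ne hnuy
    refine ⟨forest_insert_tree hF hadj hnuy, Finset.mem_insert_self _ _, ?_⟩
    rw [Finset.erase_insert hnm]
    exact huw
  · intro T hT
    simp only [Finset.mem_filter, Finset.mem_univ, true_and] at hT ⊢
    obtain ⟨hT', hmem, huw⟩ := hT
    have hadj : G.Adj u y := (SimpleGraph.mem_edgeSet G).1 (hT'.subset (by exact_mod_cast hmem))
    have hbr : ¬(HG (T.erase s(u, y))).Reachable u y :=
      not_reach_erase_self hT'.acyclic hmem hadj.ne
    refine ⟨tree_erase_twoforest hT' hmem, hadj, huw, ?_⟩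
    exact fun h => hbr (huw.trans h.symm)
  · intro E hE
    simp only [Finset.mem_filter, Finset.mem_univ, true_and] at hE
    obtain ⟨hF, hadj, huw, hnyw⟩ := hE
    exact Finset.erase_insert (not_mem_of_not_reach hadj.ne (fun h => hnyw (h.symm.trans huw)))
  · intro T hT
    simp only [Finset.mem_filter, Finset.mem_univ, true_and] at hT
    exact Finset.insert_erase hT.2.1
  · intro E hE
    simp only [Finset.mem_filter, Finset.mem_univ, true_and] at hE
    obtain ⟨hF, hadj, huw, hnyw⟩ := hE
    rw [Finset.erase_insert (not_mem_of_not_reach hadj.ne (fun h => hnyw (h.symm.trans huw)))]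

end Exchange

section KCsec

open SimpleGraph

set_option linter.unusedSectionVars false
set_option maxHeartbeats 2000000

variable {V : Type*} [Fintype V] [DecidableEq V] {G : SimpleGraph V} [DecidableRel G.Adj]

lemma KC (u w : V) :
    ∑ v, LL G u v * Qm G v w
      = volG G * (treeCount G : ℝ) * (volG G * (if u = w then 1 else 0) - dd G u) := by
  have step1 : ∑ v, LL G u v * Qm G v w
      = ∑ E ∈ Finset.univ.filter (fun E : Finset (Sym2 V) => IsSTwoForest G E),
          (-volG G * ((volG G - cvol G E w) *
            ((if ¬(HG E).Reachable u w then dd G u else 0)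
              - ∑ y, (if G.Adj u y ∧ ¬(HG E).Reachable y w then (1 : ℝ) else 0)))) := by
    calc ∑ v, LL G u v * Qm G v w
        = ∑ v, ∑ E ∈ Finset.univ.filter (fun E : Finset (Sym2 V) => IsSTwoForest G E),
            LL G u v * qE G E v w := by
          apply Finset.sum_congr rfl
          intro v _
          rw [Qm_eq v w, Finset.mul_sum]
      _ = ∑ E ∈ Finset.univ.filter (fun E : Finset (Sym2 V) => IsSTwoForest G E),
            ∑ v, LL G u v * qE G E v w := Finset.sum_comm
      _ = _ := by
          apply Finset.sum_congr rfl
          intro E hE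
          rw [Finset.mem_filter] at hE
          rw [S1 hE.2 u w, sigmaT_eq E u w, mul_assoc]
  have perE : ∀ E : Finset (Sym2 V), IsSTwoForest G E →
      (volG G - cvol G E w) *
        ((if ¬(HG E).Reachable u w then dd G u else 0)
          - ∑ y, (if G.Adj u y ∧ ¬(HG E).Reachable y w then (1 : ℝ) else 0))
      = (∑ y, if G.Adj u y ∧ ¬(HG E).Reachable u w ∧ (HG E).Reachable y w
            then cvol G E u else 0)
        - (∑ y, if G.Adj u y ∧ (HG E).Reachable u w ∧ ¬(HG E).Reachable y w
            then cvol G E y else 0) := by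
    intro E hE
    have e1 : (volG G - cvol G E w) * (if ¬(HG E).Reachable u w then dd G u else 0)
        = ∑ y, (if G.Adj u y ∧ ¬(HG E).Reachable u w then (volG G - cvol G E w) else 0) := by
      by_cases h : (HG E).Reachable u w
      · simp [h]
      · simp only [h, not_false_iff, if_true, and_true]
        rw [← sum_adj_ite u, Finset.mul_sum]
        apply Finset.sum_congr rfl
        intro y _
        by_cases ha : G.Adj u y <;> simp [ha, mul_comm]
    rw [mul_sub, e1, Finset.mul_sum, ← Finset.sum_sub_distrib, ← Finset.sum_sub_distrib]
    apply Finset.sum_congr rfl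
    intro y _
    by_cases hA : G.Adj u y
    · by_cases h1 : (HG E).Reachable u w <;> by_cases h2 : (HG E).Reachable y w
      · simp [hA, h1, h2]
      · have hc : cvol G E y = volG G - cvol G E w :=
          cvol_compl hE (fun h => h2 h.symm)
        simp [hA, h1, h2, hc]
      · have hc : cvol G E u = volG G - cvol G E w :=
          cvol_compl hE (fun h => h1 h.symm)
        simp [hA, h1, h2, hc]
      · simp [hA, h1, h2]
    · simp [hA]
  have step2 : ∑ v, LL G u v * Qm G v w
      = -volG G * ∑ T ∈ Finset.univ.filter (fun T : Finset (Sym2 V) => IsSTree G T),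
          (dd G u - volG G * (if u = w then 1 else 0)) := by
    rw [step1, ← Finset.mul_sum]
    congr 1
    calc ∑ E ∈ Finset.univ.filter (fun E : Finset (Sym2 V) => IsSTwoForest G E),
          ((volG G - cvol G E w) *
            ((if ¬(HG E).Reachable u w then dd G u else 0)
              - ∑ y, (if G.Adj u y ∧ ¬(HG E).Reachable y w then (1 : ℝ) else 0)))
        = ∑ E ∈ Finset.univ.filter (fun E : Finset (Sym2 V) => IsSTwoForest G E),
            ((∑ y, if G.Adj u y ∧ ¬(HG E).Reachable u w ∧ (HG E).Reachable y w
                then cvol G E u else 0)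
              - (∑ y, if G.Adj u y ∧ (HG E).Reachable u w ∧ ¬(HG E).Reachable y w
                then cvol G E y else 0)) := by
          apply Finset.sum_congr rfl
          intro E hE
          rw [Finset.mem_filter] at hE
          exact perE E hE.2
      _ = (∑ E ∈ Finset.univ.filter (fun E : Finset (Sym2 V) => IsSTwoForest G E),
            ∑ y, if G.Adj u y ∧ ¬(HG E).Reachable u w ∧ (HG E).Reachable y w
              then cvol G E u else 0)
          - ∑ E ∈ Finset.univ.filter (fun E : Finset (Sym2 V) => IsSTwoForest G E),
            ∑ y, if G.Adj u y ∧ (HG E).Reachable u w ∧ ¬(HG E).Reachable y w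
              then cvol G E y else 0 := Finset.sum_sub_distrib _ _
      _ = (∑ T ∈ Finset.univ.filter (fun T : Finset (Sym2 V) => IsSTree G T),
            ∑ y, if s(u, y) ∈ T ∧ (HG (T.erase s(u, y))).Reachable y w
              then cvol G (T.erase s(u, y)) u else 0)
          - ∑ T ∈ Finset.univ.filter (fun T : Finset (Sym2 V) => IsSTree G T),
            ∑ y, if s(u, y) ∈ T ∧ (HG (T.erase s(u, y))).Reachable u w
              then cvol G (T.erase s(u, y)) y else 0 := by
          congr 1
          · rw [Finset.sum_comm]
            rw [Finset.sum_congr rfl (fun y _ => exchange_c u w y)]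
            exact Finset.sum_comm
          · rw [Finset.sum_comm]
            rw [Finset.sum_congr rfl (fun y _ => exchange_a u w y)]
            exact Finset.sum_comm
      _ = ∑ T ∈ Finset.univ.filter (fun T : Finset (Sym2 V) => IsSTree G T),
            ((∑ y, if s(u, y) ∈ T ∧ (HG (T.erase s(u, y))).Reachable y w
              then cvol G (T.erase s(u, y)) u else 0)
            - ∑ y, if s(u, y) ∈ T ∧ (HG (T.erase s(u, y))).Reachable u w
              then cvol G (T.erase s(u, y)) y else 0) := (Finset.sum_sub_distrib _ _).symm
      _ = ∑ T ∈ Finset.univ.filter (fun T : Finset (Sym2 V) => IsSTree G T),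
            (dd G u - volG G * (if u = w then 1 else 0)) := by
          apply Finset.sum_congr rfl
          intro T hT
          rw [Finset.mem_filter] at hT
          exact PT hT.2 u w
  rw [step2, Finset.sum_const, nsmul_eq_mul]
  rw [show (Finset.univ.filter (fun T : Finset (Sym2 V) => IsSTree G T)).card
    = treeCount G from rfl]
  ring

end KCsec

section MatrixSec

open SimpleGraph

set_option linter.unusedSectionVars false
set_option maxHeartbeats 2000000

variable {V : Type*} [Fintype V] [DecidableEq V]

lemma mp_unique {M G1 G2 : Matrix V V ℝ} (h1 : IsMoorePenrose M G1)
    (h2 : IsMoorePenrose M G2) : G1 = G2 := by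
  obtain ⟨a1, b1, c1, d1⟩ := h1
  obtain ⟨a2, b2, c2, d2⟩ := h2
  have e1 : M * G1 = M * G2 := by
    calc M * G1 = (M * G1)ᵀ := c1.symm
      _ = G1ᵀ * Mᵀ := Matrix.transpose_mul _ _
      _ = G1ᵀ * (M * G2 * M)ᵀ := by rw [a2]
      _ = G1ᵀ * (Mᵀ * (M * G2)ᵀ) := by rw [Matrix.transpose_mul]
      _ = G1ᵀ * (Mᵀ * (M * G2)) := by rw [c2]
      _ = (G1ᵀ * Mᵀ) * (M * G2) := by rw [Matrix.mul_assoc]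
      _ = (M * G1)ᵀ * (M * G2) := by rw [Matrix.transpose_mul]
      _ = (M * G1) * (M * G2) := by rw [c1]
      _ = (M * G1 * M) * G2 := by simp only [Matrix.mul_assoc]
      _ = M * G2 := by rw [a1]
  have e2 : G1 * M = G2 * M := by
    calc G1 * M = (G1 * M)ᵀ := d1.symm
      _ = Mᵀ * G1ᵀ := Matrix.transpose_mul _ _
      _ = (M * (G2 * M))ᵀ * G1ᵀ := by rw [← Matrix.mul_assoc, a2]
      _ = ((G2 * M)ᵀ * Mᵀ) * G1ᵀ := by rw [Matrix.transpose_mul]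
      _ = (G2 * M) * (Mᵀ * G1ᵀ) := by rw [d2, Matrix.mul_assoc]
      _ = (G2 * M) * (G1 * M)ᵀ := by rw [← Matrix.transpose_mul]
      _ = (G2 * M) * (G1 * M) := by rw [d1]
      _ = G2 * (M * G1 * M) := by rw [Matrix.mul_assoc, ← Matrix.mul_assoc M G1 M]
      _ = G2 * M := by rw [a1]
  calc G1 = G1 * M * G1 := b1.symm
    _ = G2 * M * G1 := by rw [e2]
    _ = G2 * (M * G1) := Matrix.mul_assoc _ _ _
    _ = G2 * (M * G2) := by rw [e1]
    _ = G2 * M * G2 := (Matrix.mul_assoc _ _ _).symm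
    _ = G2 := b2

variable {G : SimpleGraph V} [DecidableRel G.Adj]

lemma Qm_symm (u v : V) : Qm G u v = Qm G v u := by
  unfold Qm
  congr 1
  · apply Finset.sum_congr
    · apply Finset.filter_congr
      intro E _
      constructor
      · rintro ⟨h1, h2⟩; exact ⟨h1, h2.symm⟩
      · rintro ⟨h1, h2⟩; exact ⟨h1, h2.symm⟩
    · intro E hE
      rw [Finset.mem_filter] at hE
      have hr : (SimpleGraph.fromEdgeSet (E : Set (Sym2 V))).Reachable u v := hE.2.2.symm
      congr 1
      apply Finset.sum_congr _ (fun _ _ => rfl)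
      apply Finset.filter_congr
      intro z _
      constructor
      · intro h h'; exact h (h'.trans hr.symm)
      · intro h h'; exact h (h'.trans hr)
  · apply Finset.sum_congr
    · apply Finset.filter_congr
      intro E _
      constructor
      · rintro ⟨h1, h2⟩; exact ⟨h1, fun h => h2 h.symm⟩
      · rintro ⟨h1, h2⟩; exact ⟨h1, fun h => h2 h.symm⟩
    · intro E _
      exact mul_comm _ _

/-- the normalized Laplacian from the theorem statement -/
noncomputable def Mmat (G : SimpleGraph V) [DecidableRel G.Adj] : Matrix V V ℝ :=
  Matrix.diagonal (fun w => (Real.sqrt (G.degree w))⁻¹) * G.lapMatrix ℝ *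
    Matrix.diagonal (fun w => (Real.sqrt (G.degree w))⁻¹)

/-- the candidate Green's function -/
noncomputable def Ghat (G : SimpleGraph V) [DecidableRel G.Adj] : Matrix V V ℝ :=
  Matrix.of fun u v =>
    (Real.sqrt ((G.degree u : ℝ) * (G.degree v : ℝ)) /
        ((∑ w, (G.degree w : ℝ)) ^ 2 * (treeCount G : ℝ))) * Qm G u v

/-- the projection matrix -/
noncomputable def PiM (G : SimpleGraph V) [DecidableRel G.Adj] : Matrix V V ℝ :=
  Matrix.of fun u v => Real.sqrt (dd G u) * Real.sqrt (dd G v) / volG G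

lemma Mmat_apply (u v : V) :
    Mmat G u v = (Real.sqrt (dd G u))⁻¹ * LL G u v * (Real.sqrt (dd G v))⁻¹ := by
  unfold Mmat LL dd
  rw [Matrix.mul_diagonal, Matrix.diagonal_mul]
  simp only [SimpleGraph.lapMatrix, SimpleGraph.degMatrix, Matrix.sub_apply,
    Matrix.diagonal_apply, SimpleGraph.adjMatrix_apply]

lemma Mmat_symm : (Mmat G)ᵀ = Mmat G := by
  unfold Mmat
  rw [Matrix.transpose_mul, Matrix.transpose_mul, Matrix.diagonal_transpose,
    (SimpleGraph.isSymm_lapMatrix (R := ℝ) (G := G)), Matrix.mul_assoc]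

lemma Ghat_symm : (Ghat G)ᵀ = Ghat G := by
  ext u v
  rw [Matrix.transpose_apply]
  show (Real.sqrt ((G.degree v : ℝ) * (G.degree u : ℝ)) / _) * Qm G v u = _
  rw [mul_comm ((G.degree v : ℝ)) ((G.degree u : ℝ)), Qm_symm v u]
  rfl

lemma PiM_symm : (PiM G)ᵀ = PiM G := by
  ext u v
  rw [Matrix.transpose_apply]
  show Real.sqrt (dd G v) * Real.sqrt (dd G u) / volG G = _
  rw [mul_comm]
  rfl

end MatrixSec

section Final

open SimpleGraph

set_option linter.unusedSectionVars false
set_option maxHeartbeats 2000000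

variable {V : Type*} [Fintype V] [DecidableEq V] {G : SimpleGraph V} [DecidableRel G.Adj]

lemma dd_pos (hconn : G.Connected) (hnt : Nontrivial V) (z : V) : 0 < dd G z := by
  obtain ⟨w, hw⟩ := exists_ne z
  obtain ⟨p⟩ := hconn.preconnected z w
  cases p with
  | nil => exact absurd rfl hw
  | cons h q =>
    unfold dd
    exact_mod_cast (G.degree_pos_iff_exists_adj z).2 ⟨_, h⟩

lemma vol_pos (hconn : G.Connected) (hnt : Nontrivial V) : 0 < volG G := by
  haveI := hnt
  exact Finset.sum_pos (fun i _ => dd_pos hconn hnt i) Finset.univ_nonempty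

lemma Ghat_entry (u v : V) : Ghat G u v
    = Real.sqrt (dd G u) * Real.sqrt (dd G v) / (volG G ^ 2 * (treeCount G : ℝ))
      * Qm G u v := by
  show (Real.sqrt ((G.degree u : ℝ) * (G.degree v : ℝ)) /
      ((∑ w, (G.degree w : ℝ)) ^ 2 * (treeCount G : ℝ))) * Qm G u v = _
  rw [Real.sqrt_mul (by positivity)]
  rfl

lemma PiM_entry (u v : V) : PiM G u v
    = Real.sqrt (dd G u) * Real.sqrt (dd G v) / volG G := rfl

lemma penrose_hat (hconn : G.Connected) (hnt : Nontrivial V) :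
    IsMoorePenrose (Mmat G) (Ghat G) := by
  haveI := hnt
  have hd := dd_pos hconn hnt
  have hvol := vol_pos hconn hnt
  have hτ : (0 : ℝ) < (treeCount G : ℝ) := by exact_mod_cast treeCount_pos hconn
  have hsq : ∀ z, Real.sqrt (dd G z) ≠ 0 := fun z => ne_of_gt (Real.sqrt_pos.2 (hd z))
  have hMG : Mmat G * Ghat G = 1 - PiM G := by
    ext u w
    rw [Matrix.mul_apply]
    have hsum : ∀ v, Mmat G u v * Ghat G v w
        = ((Real.sqrt (dd G u))⁻¹ * Real.sqrt (dd G w) / (volG G ^ 2 * (treeCount G : ℝ)))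
            * (LL G u v * Qm G v w) := by
      intro v
      rw [Mmat_apply, Ghat_entry]
      have h1 : (Real.sqrt (dd G v))⁻¹ * Real.sqrt (dd G v) = 1 := inv_mul_cancel₀ (hsq v)
      field_simp
      linear_combination (LL G u v * Real.sqrt (dd G w) * Qm G v w * (Real.sqrt (dd G u))⁻¹) * h1
    rw [Finset.sum_congr rfl (fun v _ => hsum v), ← Finset.mul_sum, KC u w,
      Matrix.sub_apply, Matrix.one_apply, PiM_entry]
    have hsu : Real.sqrt (dd G u) * Real.sqrt (dd G u) = dd G u :=
      Real.mul_self_sqrt (le_of_lt (hd u))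
    by_cases h : u = w
    · subst h
      rw [if_pos rfl]
      set a := Real.sqrt (dd G u) with ha
      rw [← hsu]
      have hane : a ≠ 0 := hsq u
      field_simp
    · rw [if_neg h]
      set a := Real.sqrt (dd G u) with ha
      set b := Real.sqrt (dd G w) with hb
      rw [← hsu]
      have hane : a ≠ 0 := hsq u
      field_simp
      ring
  have hGM : Ghat G * Mmat G = 1 - PiM G := by
    calc Ghat G * Mmat G = ((Mmat G)ᵀ * (Ghat G)ᵀ)ᵀ := by
          rw [← Matrix.transpose_mul, Matrix.transpose_transpose]
      _ = (Mmat G * Ghat G)ᵀ := by rw [Mmat_symm, Ghat_symm]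
      _ = (1 - PiM G)ᵀ := by rw [hMG]
      _ = 1 - PiM G := by rw [Matrix.transpose_sub, Matrix.transpose_one, PiM_symm]
  have hGPi : Ghat G * PiM G = 0 := by
    ext u w
    rw [Matrix.mul_apply, Matrix.zero_apply]
    have hsum : ∀ v, Ghat G u v * PiM G v w
        = (Real.sqrt (dd G u) * Real.sqrt (dd G w) / (volG G ^ 2 * (treeCount G : ℝ) * volG G))
            * (dd G v * Qm G u v) := by
      intro v
      rw [Ghat_entry, PiM_entry]
      have hsv : Real.sqrt (dd G v) * Real.sqrt (dd G v) = dd G v :=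
        Real.mul_self_sqrt (le_of_lt (hd v))
      set c := Real.sqrt (dd G v) with hc
      rw [← hsv]
      ring
    rw [Finset.sum_congr rfl (fun v _ => hsum v), ← Finset.mul_sum, KD u, mul_zero]
  have hPiG : PiM G * Ghat G = 0 := by
    calc PiM G * Ghat G = ((Ghat G)ᵀ * (PiM G)ᵀ)ᵀ := by
          rw [← Matrix.transpose_mul, Matrix.transpose_transpose]
      _ = (Ghat G * PiM G)ᵀ := by rw [Ghat_symm, PiM_symm]
      _ = 0 := by rw [hGPi, Matrix.transpose_zero]
  have hPiMul : PiM G * Mmat G = 0 := by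
    ext u w
    rw [Matrix.mul_apply, Matrix.zero_apply]
    have hsum : ∀ v, PiM G u v * Mmat G v w
        = (Real.sqrt (dd G u) * (Real.sqrt (dd G w))⁻¹ / volG G) * LL G v w := by
      intro v
      rw [PiM_entry, Mmat_apply]
      have h1 : Real.sqrt (dd G v) * (Real.sqrt (dd G v))⁻¹ = 1 := mul_inv_cancel₀ (hsq v)
      field_simp
      linear_combination (Real.sqrt (dd G u) * LL G v w * (Real.sqrt (dd G w))⁻¹) * h1
    rw [Finset.sum_congr rfl (fun v _ => hsum v), ← Finset.mul_sum, LL_col_sum, mul_zero]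
  have hMPi : Mmat G * PiM G = 0 := by
    calc Mmat G * PiM G = ((PiM G)ᵀ * (Mmat G)ᵀ)ᵀ := by
          rw [← Matrix.transpose_mul, Matrix.transpose_transpose]
      _ = (PiM G * Mmat G)ᵀ := by rw [PiM_symm, Mmat_symm]
      _ = 0 := by rw [hPiMul, Matrix.transpose_zero]
  refine ⟨?_, ?_, ?_, ?_⟩
  · rw [hMG, sub_mul, one_mul, hPiMul, sub_zero]
  · rw [hGM, sub_mul, one_mul, hPiG, sub_zero]
  · rw [hMG, Matrix.transpose_sub, Matrix.transpose_one, PiM_symm]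
  · rw [hGM, Matrix.transpose_sub, Matrix.transpose_one, PiM_symm]

end Final

/-- **Forest formula for the normalized Green's function of a connected simple graph.**
`𝒢` is the Moore–Penrose pseudoinverse of `ℒ = D^{-1/2} L D^{-1/2}`. -/
theorem normalized_green_forest_formula_simple
    {V : Type*} [Fintype V] [DecidableEq V]
    (G : SimpleGraph V) [DecidableRel G.Adj] (hconn : G.Connected)
    (𝒢 : Matrix V V ℝ)
    (h𝒢 : IsMoorePenrose
      (Matrix.diagonal (fun w => (Real.sqrt (G.degree w))⁻¹) * G.lapMatrix ℝ *
        Matrix.diagonal (fun w => (Real.sqrt (G.degree w))⁻¹)) 𝒢)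
    (u v : V) :
    𝒢 u v = (Real.sqrt ((G.degree u : ℝ) * (G.degree v : ℝ)) /
        ((∑ w, (G.degree w : ℝ)) ^ 2 * (treeCount G : ℝ))) *
      ((∑ E ∈ Finset.univ.filter (fun E : Finset (Sym2 V) =>
            IsSTwoForest G E ∧ (SimpleGraph.fromEdgeSet (E : Set (Sym2 V))).Reachable u v),
          (∑ z ∈ Finset.univ.filter (fun z : V =>
              ¬ (SimpleGraph.fromEdgeSet (E : Set (Sym2 V))).Reachable z u),
            (G.degree z : ℝ)) ^ 2)
       - (∑ E ∈ Finset.univ.filter (fun E : Finset (Sym2 V) =>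
            IsSTwoForest G E ∧ ¬ (SimpleGraph.fromEdgeSet (E : Set (Sym2 V))).Reachable u v),
          (∑ z ∈ Finset.univ.filter (fun z : V =>
              (SimpleGraph.fromEdgeSet (E : Set (Sym2 V))).Reachable z u),
            (G.degree z : ℝ)) *
          (∑ z ∈ Finset.univ.filter (fun z : V =>
              (SimpleGraph.fromEdgeSet (E : Set (Sym2 V))).Reachable z v),
            (G.degree z : ℝ)))) := by
  by_cases hnt : Nontrivial V
  · have key : 𝒢 = Ghat G := mp_unique h𝒢 (penrose_hat hconn hnt)
    rw [key]
    rfl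
  · have hsub : Subsingleton V := not_nontrivial_iff_subsingleton.mp hnt
    have hdeg : ∀ z : V, G.degree z = 0 := by
      intro z
      by_contra h
      obtain ⟨w, hw⟩ := (G.degree_pos_iff_exists_adj z).1 (Nat.pos_of_ne_zero h)
      exact hw.ne (Subsingleton.elim z w)
    have hM0 : (Matrix.diagonal (fun w => (Real.sqrt (G.degree w))⁻¹) * G.lapMatrix ℝ *
        Matrix.diagonal (fun w => (Real.sqrt (G.degree w))⁻¹)) = 0 := by
      ext a b
      rw [Matrix.mul_diagonal, Matrix.diagonal_mul, Matrix.zero_apply]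
      have hadj : ¬G.Adj a b := fun h => h.ne (Subsingleton.elim a b)
      simp [SimpleGraph.lapMatrix, SimpleGraph.degMatrix, Matrix.sub_apply,
        Matrix.diagonal_apply, hdeg, hadj]
    have h1 := h𝒢.2.1
    rw [hM0, Matrix.mul_zero, Matrix.zero_mul] at h1
    rw [← h1]
    simp [hdeg]

end Paper
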